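/- For any row-stochastic matrix A ∈ ℝ^{n×n} and any x ∈ ℝ^n, v(Ax) ≤ τ(A)·v(x), where v(x) = max_i x_i - min_i x_i and τ is the coefficient of ergodicity. -/
import Mathlib


open MeasureTheory Filter

def IsStochastic {n : ℕ} (A : Matrix (Fin n) (Fin n) ℝ) : Prop :=
  (∀ i j, 0 ≤ A i j) ∧ ∀ i, ∑ j, A i j = 1

noncomputable def tau {n : ℕ} (A : Matrix (Fin n) (Fin n) ℝ) : ℝ :=
  1 - ⨅ p : Fin n × Fin n, ∑ s, min (A p.1 s) (A p.2 s)

def Scrambling {n : ℕ} (A : Matrix (Fin n) (Fin n) ℝ) : Prop :=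
  ∀ i j, ∃ s, 0 < A i s ∧ 0 < A j s

noncomputable def spread {n : ℕ} (x : Fin n → ℝ) : ℝ := (⨆ i, x i) - ⨅ i, x i

theorem spread_mulVec_le_tau_mul {n : ℕ} (hn : 0 < n) (A : Matrix (Fin n) (Fin n) ℝ)
    (hA : IsStochastic A) (x : Fin n → ℝ) :
    spread (A.mulVec x) ≤ tau A * spread x := by
  haveI : Nonempty (Fin n) := Fin.pos_iff_nonempty.mp hn
  obtain ⟨hpos, hsum⟩ := hA
  set M := ⨆ i, x i with hM
  set m := ⨅ i, x i with hm
  have hxM : ∀ s, x s ≤ M := fun s => le_ciSup (Set.Finite.bddAbove (Set.finite_range x)) s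
  have hxm : ∀ s, m ≤ x s := fun s => ciInf_le (Set.Finite.bddBelow (Set.finite_range x)) s
  have hs0 : 0 ≤ spread x := by
    have h1 := hxm (Classical.arbitrary (Fin n))
    have h2 := hxM (Classical.arbitrary (Fin n))
    simp only [spread, ← hM, ← hm]; linarith
  have key : ∀ i j, A.mulVec x i - A.mulVec x j ≤
      (1 - ∑ s, min (A i s) (A j s)) * spread x := by
    intro i j
    have hi : A.mulVec x i = ∑ s, A i s * x s := rfl
    have hj : A.mulVec x j = ∑ s, A j s * x s := rfl
    have hsplit : ∀ k, (∑ s, A k s * x s)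
        = ∑ s, (A k s - min (A i s) (A j s)) * x s + ∑ s, min (A i s) (A j s) * x s := by
      intro k
      rw [← Finset.sum_add_distrib]
      congr 1; ext s; ring
    have hub : ∑ s, (A i s - min (A i s) (A j s)) * x s
        ≤ (1 - ∑ s, min (A i s) (A j s)) * M := by
      have : ∑ s, (A i s - min (A i s) (A j s)) * x s
          ≤ ∑ s, (A i s - min (A i s) (A j s)) * M := by
        apply Finset.sum_le_sum
        intro s _
        exact mul_le_mul_of_nonneg_left (hxM s) (by simp [min_le_left])
      calc ∑ s, (A i s - min (A i s) (A j s)) * x s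
          ≤ ∑ s, (A i s - min (A i s) (A j s)) * M := this
        _ = (1 - ∑ s, min (A i s) (A j s)) * M := by
            rw [← Finset.sum_mul, Finset.sum_sub_distrib, hsum i]
    have hlb : (1 - ∑ s, min (A i s) (A j s)) * m
        ≤ ∑ s, (A j s - min (A i s) (A j s)) * x s := by
      have : ∑ s, (A j s - min (A i s) (A j s)) * m
          ≤ ∑ s, (A j s - min (A i s) (A j s)) * x s := by
        apply Finset.sum_le_sum
        intro s _
        exact mul_le_mul_of_nonneg_left (hxm s) (by simp [min_le_right])
      calc (1 - ∑ s, min (A i s) (A j s)) * m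
          = ∑ s, (A j s - min (A i s) (A j s)) * m := by
            rw [← Finset.sum_mul, Finset.sum_sub_distrib, hsum j]
        _ ≤ _ := this
    have hspr : spread x = M - m := by simp [spread, ← hM, ← hm]
    rw [hi, hj, hsplit i, hsplit j, hspr]
    nlinarith [hub, hlb]
  obtain ⟨i0, hi0⟩ := Finite.exists_max (A.mulVec x)
  obtain ⟨j0, hj0⟩ := Finite.exists_min (A.mulVec x)
  have hsup : (⨆ i, A.mulVec x i) ≤ A.mulVec x i0 := ciSup_le hi0
  have hinf : A.mulVec x j0 ≤ ⨅ i, A.mulVec x i := le_ciInf hj0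
  have htau : 1 - ∑ s, min (A i0 s) (A j0 s) ≤ tau A := by
    have : (⨅ p : Fin n × Fin n, ∑ s, min (A p.1 s) (A p.2 s))
        ≤ ∑ s, min (A i0 s) (A j0 s) :=
      ciInf_le (Set.Finite.bddBelow (Set.finite_range _)) (i0, j0)
    simpa [tau] using sub_le_sub_left this 1
  calc spread (A.mulVec x) ≤ A.mulVec x i0 - A.mulVec x j0 := by
        simp only [spread]; linarith
    _ ≤ (1 - ∑ s, min (A i0 s) (A j0 s)) * spread x := key i0 j0
    _ ≤ tau A * spread x := mul_le_mul_of_nonneg_right htau hs0
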